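/- If u₁ : [0,1] → ℝ is any C² function satisfying u₁ − ε u₁'' = f₁ on [0,1] with u₁(0) = u₁(1) = 0, then the function ω₃(x,z) := 2π u₁(z) cos(2πx) satisfies ω₃ − ε Δ ω₃ + u₁ ∂_x ω₃ = ∂_x f₂ on ℝ×[0,1], where f₂(x,z) = f₁(z)(1 + sin(2πx)) + 4π²ε u₁(z) sin(2πx) + 2π u₁(z)² cos(2πx); moreover ω₃ is 1-periodic in x and ω₃(x,0) = ω₃(x,1) = 0 for all x. -/

import Mathlib

/-- Partial derivative in `x` of a function of two variables. -/
noncomputable def pdx (g : ℝ → ℝ → ℝ) (x z : ℝ) : ℝ := deriv (fun x' => g x' z) x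

/-- Partial derivative in `z` of a function of two variables. -/
noncomputable def pdz (g : ℝ → ℝ → ℝ) (x z : ℝ) : ℝ := deriv (fun z' => g x z') z

/-- Laplacian `∂²_x + ∂²_z` of a function of two variables. -/
noncomputable def lap (g : ℝ → ℝ → ℝ) (x z : ℝ) : ℝ :=
  pdx (pdx g) x z + pdz (pdz g) x z

/-- The data `f₂(x,z) = f₁(z)(1+sin 2πx) + 4π²ε u₁(z) sin 2πx + 2π u₁(z)² cos 2πx`. -/
noncomputable def fTwo (ε : ℝ) (f₁ u₁ : ℝ → ℝ) (x z : ℝ) : ℝ :=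
  f₁ z * (1 + Real.sin (2 * Real.pi * x))
    + 4 * Real.pi ^ 2 * ε * u₁ z * Real.sin (2 * Real.pi * x)
    + 2 * Real.pi * (u₁ z) ^ 2 * Real.cos (2 * Real.pi * x)


lemma hdc (x : ℝ) : HasDerivAt (fun x' : ℝ => Real.cos (2 * Real.pi * x'))
    (-Real.sin (2 * Real.pi * x) * (2 * Real.pi)) x := by
  simpa [Function.comp_def] using (Real.hasDerivAt_cos (2 * Real.pi * x)).comp x
    ((hasDerivAt_id x).const_mul (2 * Real.pi))

lemma hds (x : ℝ) : HasDerivAt (fun x' : ℝ => Real.sin (2 * Real.pi * x'))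
    (Real.cos (2 * Real.pi * x) * (2 * Real.pi)) x := by
  simpa [Function.comp_def] using (Real.hasDerivAt_sin (2 * Real.pi * x)).comp x
    ((hasDerivAt_id x).const_mul (2 * Real.pi))

theorem statement11 (ε : ℝ) (hε : 0 < ε)
    (f₁ : ℝ → ℝ) (hf₁ : Continuous f₁)
    (u₁ : ℝ → ℝ) (hu₁ : ContDiff ℝ 2 u₁)
    (heq : ∀ z ∈ Set.Icc (0:ℝ) 1, u₁ z - ε * deriv (deriv u₁) z = f₁ z)
    (hb0 : u₁ 0 = 0) (hb1 : u₁ 1 = 0) :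
    (∀ x : ℝ, ∀ z ∈ Set.Icc (0:ℝ) 1,
      2 * Real.pi * u₁ z * Real.cos (2 * Real.pi * x)
        - ε * lap (fun x' z' => 2 * Real.pi * u₁ z' * Real.cos (2 * Real.pi * x')) x z
        + u₁ z * pdx (fun x' z' => 2 * Real.pi * u₁ z' * Real.cos (2 * Real.pi * x')) x z
      = pdx (fTwo ε f₁ u₁) x z)
    ∧ (∀ x z : ℝ, 2 * Real.pi * u₁ z * Real.cos (2 * Real.pi * (x + 1))
        = 2 * Real.pi * u₁ z * Real.cos (2 * Real.pi * x))
    ∧ (∀ x : ℝ, 2 * Real.pi * u₁ 0 * Real.cos (2 * Real.pi * x) = 0)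
    ∧ (∀ x : ℝ, 2 * Real.pi * u₁ 1 * Real.cos (2 * Real.pi * x) = 0) := by
  have hu₁d : Differentiable ℝ u₁ := hu₁.differentiable (by norm_num)
  have hu₁' : ContDiff ℝ 1 (deriv u₁) := by
    have := (contDiff_succ_iff_deriv.mp (show ContDiff ℝ (1+1) u₁ by norm_num [hu₁])).2
    exact this.2
  have hu₁'d : Differentiable ℝ (deriv u₁) := hu₁'.differentiable (by norm_num)
  refine ⟨?_, ?_, ?_, ?_⟩
  · intro x z hz
    -- pdx ω₃
    have hpdx : ∀ x' : ℝ, pdx (fun x' z' => 2 * Real.pi * u₁ z' * Real.cos (2 * Real.pi * x')) x' z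
        = 2 * Real.pi * u₁ z * (-Real.sin (2 * Real.pi * x') * (2 * Real.pi)) := by
      intro x'
      exact ((hdc x').const_mul (2 * Real.pi * u₁ z)).deriv
    -- pdx pdx ω₃
    have hpdx2 : pdx (pdx (fun x' z' => 2 * Real.pi * u₁ z' * Real.cos (2 * Real.pi * x'))) x z
        = 2 * Real.pi * u₁ z * (-(Real.cos (2 * Real.pi * x) * (2 * Real.pi)) * (2 * Real.pi)) := by
      unfold pdx
      have : (fun x' => deriv (fun x'' => 2 * Real.pi * u₁ z * Real.cos (2 * Real.pi * x'')) x')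
          = fun x' => 2 * Real.pi * u₁ z * (-Real.sin (2 * Real.pi * x') * (2 * Real.pi)) := by
        funext x'; exact ((hdc x').const_mul (2 * Real.pi * u₁ z)).deriv
      rw [this]
      exact (((hds x).neg.mul_const (2 * Real.pi)).const_mul (2 * Real.pi * u₁ z)).deriv
    -- pdz ω₃ and pdz pdz ω₃
    have hpdz : ∀ z' : ℝ, pdz (fun x' z' => 2 * Real.pi * u₁ z' * Real.cos (2 * Real.pi * x')) x z'
        = 2 * Real.pi * deriv u₁ z' * Real.cos (2 * Real.pi * x) := by
      intro z'
      exact (((hu₁d z').hasDerivAt.const_mul (2 * Real.pi)).mul_const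
        (Real.cos (2 * Real.pi * x))).deriv
    have hpdz2 : pdz (pdz (fun x' z' => 2 * Real.pi * u₁ z' * Real.cos (2 * Real.pi * x'))) x z
        = 2 * Real.pi * deriv (deriv u₁) z * Real.cos (2 * Real.pi * x) := by
      unfold pdz
      have : (fun z' => deriv (fun z'' => 2 * Real.pi * u₁ z'' * Real.cos (2 * Real.pi * x)) z')
          = fun z' => 2 * Real.pi * deriv u₁ z' * Real.cos (2 * Real.pi * x) := by
        funext z'
        exact (((hu₁d z').hasDerivAt.const_mul (2 * Real.pi)).mul_const
          (Real.cos (2 * Real.pi * x))).deriv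
      rw [this]
      exact (((hu₁'d z).hasDerivAt.const_mul (2 * Real.pi)).mul_const
        (Real.cos (2 * Real.pi * x))).deriv
    -- pdx fTwo
    have hf2 : pdx (fTwo ε f₁ u₁) x z
        = f₁ z * (Real.cos (2 * Real.pi * x) * (2 * Real.pi))
          + 4 * Real.pi ^ 2 * ε * u₁ z * (Real.cos (2 * Real.pi * x) * (2 * Real.pi))
          + 2 * Real.pi * (u₁ z) ^ 2 * (-Real.sin (2 * Real.pi * x) * (2 * Real.pi)) := by
      unfold pdx fTwo
      have h1 : HasDerivAt (fun x' => f₁ z * (1 + Real.sin (2 * Real.pi * x')))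
          (f₁ z * (Real.cos (2 * Real.pi * x) * (2 * Real.pi))) x := by
        simpa using ((hasDerivAt_const x (1:ℝ)).add (hds x)).const_mul (f₁ z)
      exact ((h1.add ((hds x).const_mul (4 * Real.pi ^ 2 * ε * u₁ z))).add
        ((hdc x).const_mul (2 * Real.pi * (u₁ z) ^ 2))).deriv
    rw [hf2]
    unfold lap
    rw [hpdx2, hpdz2, hpdx x, ← heq z hz]
    ring
  · intro x z
    have : 2 * Real.pi * (x + 1) = 2 * Real.pi * x + 2 * Real.pi := by ring
    rw [this, Real.cos_add_two_pi]
  · intro x; rw [hb0]; ring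
  · intro x; rw [hb1]; ring
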